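/- For the constant kernel K ≡ 1, the boundary operator ∂_ℓ⁰ g(x) = Σᵢ (-1)ⁱ ∫_X g(x₀,…,x_{i-1},t,xᵢ,…,x_{ℓ-1}) dμ(t) satisfies: for ℓ > 1, Im ∂_ℓ⁰ = Ker ∂_{ℓ-1}⁰, and Im ∂₁⁰ = {1}^⊥, the orthogonal complement of the constant functions in L²(X). -/

import Mathlib

open MeasureTheory

/-- The boundary operator `∂_ℓ⁰` for the constant kernel `K ≡ 1`:
`∂_ℓ⁰ g(x₀,…,x_{ℓ-1}) = Σᵢ (-1)ⁱ ∫_X g(x₀,…,x_{i-1},t,xᵢ,…,x_{ℓ-1}) dμ(t)`.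
Here `boundary0 μ n : L²(X^{n+1}) → L²(X^n)` plays the role of `∂_n⁰`. -/
noncomputable def boundary0 {X : Type*} [MeasurableSpace X] (μ : Measure X)
    (n : ℕ) (g : (Fin (n + 1) → X) → ℝ) : (Fin n → X) → ℝ :=
  fun x => ∑ i : Fin (n + 1),
    (-1 : ℝ) ^ (i : ℕ) * ∫ t, g (i.insertNth t x) ∂μ

/- aux -/
section aux

lemma mySuccAbove_comm {n : ℕ} (i j : Fin (n+1)) (hji : j ≤ i) (m : Fin n) :
    (i.succ).succAbove (j.succAbove m) = (j.castSucc).succAbove (i.succAbove m) := by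
  ext
  simp only [Fin.succAbove, Fin.lt_def, Fin.le_def] at *
  split_ifs <;> simp_all [Fin.val_succ, Fin.coe_castSucc] <;> omega

lemma myInsertNth_comm {β : Type*} {n : ℕ} (i j : Fin (n+1)) (hji : j ≤ i) (s t : β)
    (x : Fin n → β) :
    Fin.insertNth (α := fun _ => β) j.castSucc s (Fin.insertNth (α := fun _ => β) i t x)
      = Fin.insertNth i.succ t (Fin.insertNth j s x) := by
  rw [Fin.insertNth_eq_iff]
  refine ⟨?_, ?_⟩
  · rw [← Fin.succAbove_succ_of_le i j hji, Fin.insertNth_apply_succAbove,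
      Fin.insertNth_apply_same]
  · rw [Fin.insertNth_eq_iff]
    simp only [Fin.removeNth]
    refine ⟨?_, ?_⟩
    · rw [Fin.succAbove_castSucc_of_le j i hji, Fin.insertNth_apply_same]
    · funext m
      show x m = _
      simp only [Fin.removeNth]
      rw [← mySuccAbove_comm i j hji, Fin.insertNth_apply_succAbove,
        Fin.insertNth_apply_succAbove]

lemma myTail_insertNth {β : Type*} {n : ℕ} (j : Fin (n+1)) (t : β) (x : Fin (n+1) → β) :
    Fin.tail (Fin.insertNth (α := fun _ => β) j.succ t x) = Fin.insertNth j t (Fin.tail x) := by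
  funext k
  refine j.succAboveCases ?_ ?_ k
  · show Fin.insertNth (α := fun _ => β) j.succ t x (j.succ) = _
    rw [Fin.insertNth_apply_same, Fin.insertNth_apply_same]
  · intro m
    show Fin.insertNth (α := fun _ => β) j.succ t x ((j.succAbove m).succ) = _
    rw [Fin.insertNth_apply_succAbove, ← Fin.succ_succAbove_succ, Fin.insertNth_apply_succAbove]
    rfl

variable {X : Type*} [MeasurableSpace X] (μ : Measure X) [IsProbabilityMeasure μ]

/-- The measurable equivalence `(t, x) ↦ i.insertNth t x`. -/
noncomputable def insEquiv (n : ℕ) (i : Fin (n+1)) :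
    (X × (Fin n → X)) ≃ᵐ (Fin (n+1) → X) :=
  (MeasurableEquiv.piFinSuccAbove (fun _ => X) i).symm

lemma insEquiv_apply {n : ℕ} (i : Fin (n+1)) (p : X × (Fin n → X)) :
    insEquiv n i p = i.insertNth p.1 p.2 := rfl

lemma mp_ins (n : ℕ) (i : Fin (n+1)) :
    MeasurePreserving (insEquiv (X := X) n i)
      (μ.prod (Measure.pi fun _ : Fin n => μ)) (Measure.pi fun _ : Fin (n+1) => μ) :=
  (measurePreserving_piFinSuccAbove (fun _ : Fin (n+1) => μ) i).symm

lemma mp_tail (n : ℕ) :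
    MeasurePreserving (Fin.tail : (Fin (n+1) → X) → (Fin n → X))
      (Measure.pi fun _ : Fin (n+1) => μ) (Measure.pi fun _ : Fin n => μ) := by
  have h1 := measurePreserving_piFinSuccAbove (fun _ : Fin (n+1) => μ) 0
  have h2 : MeasurePreserving (Prod.snd : X × (Fin n → X) → (Fin n → X))
      (μ.prod (Measure.pi fun _ : Fin n => μ)) (Measure.pi fun _ : Fin n => μ) :=
    ⟨measurable_snd, by simp⟩
  exact h2.comp h1

/-- the homotopy identity: `∂(h ∘ tail) = h - (∂h) ∘ tail`, pointwise. -/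
lemma homotopy {n : ℕ} (h : (Fin (n+1) → X) → ℝ) (x : Fin (n+1) → X) :
    boundary0 μ (n+1) (fun y => h (Fin.tail y)) x = h x - boundary0 μ n h (Fin.tail x) := by
  unfold boundary0
  rw [Fin.sum_univ_succ]
  have h0 : ∫ t, h (Fin.tail (Fin.insertNth (α := fun _ => X) (0 : Fin (n+2)) t x)) ∂μ = h x := by
    simp [Fin.insertNth_zero']
  simp only [Fin.val_zero, pow_zero, one_mul, h0, Fin.val_succ, pow_succ]
  rw [sub_eq_add_neg, ← Finset.sum_neg_distrib]
  congr 1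
  refine Finset.sum_congr rfl fun j _ => ?_
  simp only [myTail_insertNth]
  ring
end aux


/-- for the constant kernel `K ≡ 1` the boundary operator
satisfies `Im ∂_ℓ⁰ = Ker ∂_{ℓ-1}⁰` for `ℓ > 1`, and
`Im ∂₁⁰ = {1}^⊥`, the orthogonal complement of the constants in `L²(X)`. -/
theorem boundary0_image_eq_kernel
    {X : Type*} [MeasurableSpace X] (μ : Measure X) [IsProbabilityMeasure μ] :
    -- For `ℓ = m + 2 > 1`: `Ker ∂_{ℓ-1}⁰ ⊆ Im ∂_ℓ⁰` …
    (∀ (m : ℕ) (h : (Fin (m + 2) → X) → ℝ),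
      MemLp h 2 (Measure.pi fun _ : Fin (m + 2) => μ) →
      boundary0 μ (m + 1) h =ᵐ[Measure.pi fun _ : Fin (m + 1) => μ] 0 →
      ∃ g : (Fin (m + 3) → X) → ℝ,
        MemLp g 2 (Measure.pi fun _ : Fin (m + 3) => μ) ∧
        boundary0 μ (m + 2) g =ᵐ[Measure.pi fun _ : Fin (m + 2) => μ] h) ∧
    -- … and `Im ∂_ℓ⁰ ⊆ Ker ∂_{ℓ-1}⁰`
    (∀ (m : ℕ) (g : (Fin (m + 3) → X) → ℝ),
      MemLp g 2 (Measure.pi fun _ : Fin (m + 3) => μ) →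
      boundary0 μ (m + 1) (boundary0 μ (m + 2) g)
        =ᵐ[Measure.pi fun _ : Fin (m + 1) => μ] 0) ∧
    -- `Im ∂₁⁰ ⊆ {1}^⊥` …
    (∀ g : (Fin 2 → X) → ℝ,
      MemLp g 2 (Measure.pi fun _ : Fin 2 => μ) →
      ∫ x, boundary0 μ 1 g x ∂(Measure.pi fun _ : Fin 1 => μ) = 0) ∧
    -- … and `{1}^⊥ ⊆ Im ∂₁⁰`
    (∀ h : (Fin 1 → X) → ℝ,
      MemLp h 2 (Measure.pi fun _ : Fin 1 => μ) →
      ∫ x, h x ∂(Measure.pi fun _ : Fin 1 => μ) = 0 →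
      ∃ g : (Fin 2 → X) → ℝ,
        MemLp g 2 (Measure.pi fun _ : Fin 2 => μ) ∧
        boundary0 μ 1 g =ᵐ[Measure.pi fun _ : Fin 1 => μ] h) := by
  refine ⟨?_, ?_, ?_, ?_⟩
  · -- part 1
    intro m h hmem hker
    refine ⟨fun y => h (Fin.tail y), hmem.comp_measurePreserving (mp_tail μ (m+2)), ?_⟩
    have hcomp := (mp_tail μ (m+1) (X := X)).quasiMeasurePreserving.ae_eq_comp hker
    filter_upwards [hcomp] with x hx
    have := homotopy μ h x
    simp only [Function.comp_apply, Pi.zero_apply] at hx this ⊢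
    rw [this, hx, sub_zero]
  · -- part 2
    intro m g hmem
    have hg : Integrable g (Measure.pi fun _ : Fin (m+3) => μ) := hmem.integrable (by norm_num)
    have hbig : ∀ (i : Fin (m+2)) (j : Fin (m+3)),
        Integrable (fun p : (Fin (m+1) → X) × (X × X) =>
            g (j.insertNth p.2.1 (i.insertNth p.2.2 p.1)))
          ((Measure.pi fun _ : Fin (m+1) => μ).prod (μ.prod μ)) := by
      intro i j
      have h1 : MeasurePreserving
          (fun p : X × (X × (Fin (m+1) → X)) => (p.1, (insEquiv (m+1) i) p.2))
          (μ.prod (μ.prod (Measure.pi fun _ : Fin (m+1) => μ)))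
          (μ.prod (Measure.pi fun _ : Fin (m+2) => μ)) :=
        (MeasurePreserving.id μ).prod (mp_ins μ (m+1) i)
      have h2 : MeasurePreserving
          (fun p : X × (X × (Fin (m+1) → X)) => j.insertNth p.1 (i.insertNth p.2.1 p.2.2))
          (μ.prod (μ.prod (Measure.pi fun _ : Fin (m+1) => μ)))
          (Measure.pi fun _ : Fin (m+3) => μ) := (mp_ins μ (m+2) j).comp h1
      have h3 : Integrable (fun p : X × (X × (Fin (m+1) → X)) =>
          g (j.insertNth p.1 (i.insertNth p.2.1 p.2.2)))
          (μ.prod (μ.prod (Measure.pi fun _ : Fin (m+1) => μ))) :=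
        (h2.integrable_comp hg.aestronglyMeasurable).mpr hg
      have h4 : Integrable (fun q : (X × X) × (Fin (m+1) → X) =>
          g (j.insertNth q.1.1 (i.insertNth q.1.2 q.2)))
          ((μ.prod μ).prod (Measure.pi fun _ : Fin (m+1) => μ)) :=
        ((measurePreserving_prodAssoc μ μ _).integrable_comp h3.aestronglyMeasurable).mpr h3
      exact h4.swap
    have hae : ∀ᵐ x ∂(Measure.pi fun _ : Fin (m+1) => μ), ∀ (i : Fin (m+2)) (j : Fin (m+3)),
        Integrable (fun q : X × X => g (j.insertNth q.1 (i.insertNth q.2 x))) (μ.prod μ) :=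
      ae_all_iff.2 fun i => ae_all_iff.2 fun j => (hbig i j).prod_right_ae
    filter_upwards [hae] with x hx
    have key : ∀ i j : Fin (m+2), j ≤ i →
        (∫ t, ∫ s, g ((j.castSucc).insertNth s (i.insertNth t x)) ∂μ ∂μ)
          = ∫ t, ∫ s, g ((i.succ).insertNth s (j.insertNth t x)) ∂μ ∂μ := by
      intro i j hji
      have e1 : (∫ t, ∫ s, g ((j.castSucc).insertNth s (i.insertNth t x)) ∂μ ∂μ)
          = ∫ t, ∫ s, g ((i.succ).insertNth t (j.insertNth s x)) ∂μ ∂μ := by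
        simp_rw [myInsertNth_comm i j hji]
      rw [e1]
      exact MeasureTheory.integral_integral_swap
        (f := fun t s => g ((i.succ).insertNth t (j.insertNth s x))) (hx j i.succ)
    show boundary0 μ (m+1) (boundary0 μ (m+2) g) x = 0
    have expand : boundary0 μ (m+1) (boundary0 μ (m+2) g) x
        = ∑ p : Fin (m+2) × Fin (m+3), ((-1:ℝ)^((p.1:ℕ)+(p.2:ℕ)))
            * ∫ t, ∫ s, g (p.2.insertNth s (p.1.insertNth t x)) ∂μ ∂μ := by
      rw [Fintype.sum_prod_type]
      unfold boundary0
      refine Finset.sum_congr rfl fun i _ => ?_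
      rw [integral_finset_sum _ (fun j _ => ((hx i j).integral_prod_right).const_mul _),
        Finset.mul_sum]
      refine Finset.sum_congr rfl fun j _ => ?_
      rw [integral_const_mul, pow_add]
      ring
    rw [expand]
    set F : Fin (m+2) × Fin (m+3) → ℝ := fun p => ((-1:ℝ)^((p.1:ℕ)+(p.2:ℕ)))
        * ∫ t, ∫ s, g (p.2.insertNth s (p.1.insertNth t x)) ∂μ ∂μ with hF
    have hsplit := Finset.sum_filter_add_sum_filter_not Finset.univ
      (fun p : Fin (m+2) × Fin (m+3) => (p.2 : ℕ) ≤ (p.1 : ℕ)) F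
    have hneg : (∑ p ∈ Finset.univ.filter
          (fun p : Fin (m+2) × Fin (m+3) => (p.2:ℕ) ≤ (p.1:ℕ)), F p)
        = ∑ p ∈ Finset.univ.filter
          (fun p : Fin (m+2) × Fin (m+3) => ¬((p.2:ℕ) ≤ (p.1:ℕ))), (- F p) := by
      refine Finset.sum_nbij'
        (fun p => (⟨(p.2:ℕ) % (m+2), Nat.mod_lt _ (by omega)⟩, p.1.succ))
        (fun q => (⟨(q.2:ℕ) - 1, by omega⟩, (q.1 : Fin (m+2)).castSucc))
        ?_ ?_ ?_ ?_ ?_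
      · intro p hp
        simp only [Finset.mem_filter, Finset.mem_univ, true_and] at hp ⊢
        have h2 : (p.2:ℕ) < m + 2 := by have := p.1.isLt; omega
        simp [Nat.mod_eq_of_lt h2]
        omega
      · intro q hq
        simp only [Finset.mem_filter, Finset.mem_univ, true_and, not_le] at hq ⊢
        simp
        omega
      · intro p hp
        simp only [Finset.mem_filter, Finset.mem_univ, true_and] at hp
        have h2 : (p.2:ℕ) < m + 2 := by have := p.1.isLt; omega
        ext
        · simp
        · simp [Nat.mod_eq_of_lt h2]
      · intro q hq
        simp only [Finset.mem_filter, Finset.mem_univ, true_and, not_le] at hq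
        have h1 : 1 ≤ (q.2:ℕ) := by omega
        ext
        · simp [Nat.mod_eq_of_lt q.1.isLt]
        · simp [Fin.val_succ]
          omega
      · intro p hp
        simp only [Finset.mem_filter, Finset.mem_univ, true_and] at hp
        have h2 : (p.2:ℕ) < m + 2 := by have := p.1.isLt; omega
        set jj : Fin (m+2) := ⟨(p.2:ℕ) % (m+2), Nat.mod_lt _ (by omega)⟩ with hjj
        have hcast : jj.castSucc = p.2 := by
          ext; simp [hjj, Nat.mod_eq_of_lt h2]
        have hle : jj ≤ p.1 := by
          rw [Fin.le_def]; simp [hjj, Nat.mod_eq_of_lt h2]; omega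
        have hk := key p.1 jj hle
        rw [hcast] at hk
        simp only [hF]
        rw [hk]
        have hv1 : ((jj:ℕ) + ((p.1.succ :  Fin (m+3)):ℕ)) = (p.2:ℕ) + ((p.1:ℕ) + 1) := by
          simp [hjj, Nat.mod_eq_of_lt h2, Fin.val_succ]
        rw [hv1]
        have : ((-1:ℝ))^((p.2:ℕ) + ((p.1:ℕ)+1)) = -((-1:ℝ))^((p.1:ℕ)+(p.2:ℕ)) := by
          rw [← Nat.add_assoc, pow_succ, pow_add, pow_add]
          ring
        rw [this]
        ring
    have hzero : (∑ p ∈ Finset.univ.filter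
          (fun p : Fin (m+2) × Fin (m+3) => (p.2:ℕ) ≤ (p.1:ℕ)), F p)
        + ∑ p ∈ Finset.univ.filter
          (fun p : Fin (m+2) × Fin (m+3) => ¬((p.2:ℕ) ≤ (p.1:ℕ))), F p = 0 := by
      rw [hneg, ← Finset.sum_add_distrib]
      simp
    show ∑ p : Fin (m+2) × Fin (m+3), F p = 0
    rw [← hsplit]
    exact hzero
  · -- part 3
    intro g hmem
    have hg : Integrable g (Measure.pi fun _ : Fin 2 => μ) :=
      hmem.integrable (by norm_num)
    have base : ∀ i : Fin 2, Integrable (fun p : X × (Fin 1 → X) => g (i.insertNth p.1 p.2))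
        (μ.prod (Measure.pi fun _ : Fin 1 => μ)) := fun i =>
      ((mp_ins μ 1 i).integrable_comp hg.aestronglyMeasurable).mpr hg
    have hIbig : ∀ i : Fin 2, Integrable
        (fun x : Fin 1 → X => (-1 : ℝ) ^ (i : ℕ) * ∫ t, g (i.insertNth t x) ∂μ)
        (Measure.pi fun _ : Fin 1 => μ) := fun i =>
      ((base i).integral_prod_right).const_mul _
    have hval : ∀ i : Fin 2,
        ∫ x, (∫ t, g (i.insertNth t x) ∂μ) ∂(Measure.pi fun _ : Fin 1 => μ)
          = ∫ y, g y ∂(Measure.pi fun _ : Fin 2 => μ) := by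
      intro i
      rw [MeasureTheory.integral_integral (f := fun x t => g (i.insertNth t x)) ((base i).swap)]
      rw [← integral_prod_swap]
      exact (mp_ins μ 1 i).integral_comp' g
    unfold boundary0
    rw [integral_finset_sum _ (fun i _ => hIbig i)]
    have : ∀ i : Fin 2,
        ∫ x, (-1 : ℝ) ^ (i : ℕ) * ∫ t, g (i.insertNth t x) ∂μ ∂(Measure.pi fun _ : Fin 1 => μ)
          = (-1 : ℝ) ^ (i : ℕ) * ∫ y, g y ∂(Measure.pi fun _ : Fin 2 => μ) := fun i => by
      rw [integral_const_mul, hval i]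
    simp only [this]
    rw [Fin.sum_univ_two]
    simp
  · -- part 4
    intro h hmem hint
    refine ⟨fun y => h (Fin.tail y), hmem.comp_measurePreserving (mp_tail μ 1), ?_⟩
    have hzero : ∀ z : Fin 0 → X, boundary0 μ 0 h z = 0 := by
      intro z
      unfold boundary0
      rw [Fin.sum_univ_one]
      have : ∀ t : X, (0 : Fin 1).insertNth t z = fun _ : Fin 1 => t := by
        intro t; funext k
        cases k using Fin.cases with
        | zero => rfl
        | succ m => exact m.elim0
      simp only [this, Fin.val_zero, pow_zero, one_mul]
      have hmp := (measurePreserving_funUnique μ (Fin 1)).symm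
      rw [show (fun t : X => h (fun _ : Fin 1 => t))
          = fun t : X => h ((MeasurableEquiv.funUnique (Fin 1) X).symm t) from rfl]
      rw [hmp.integral_comp' h]
      exact hint
    refine Filter.Eventually.of_forall fun x => ?_
    rw [homotopy μ h x, hzero, sub_zero]
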